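/- Let q(z) = q₀z² + 2q₁z + q₂ be a nonzero real quadratic and let Π be a real polynomial of degree at most 4. Then q(z)²Π''(z) − 3q(z)q'(z)Π'(z) + 3q'(z)²Π(z) = 0 for all real z if and only if there exists a real quadratic π with ⟨π,q⟩ = 0 such that Π(z) = q(z)π(z) for all z. -/

import Mathlib

/-- For a nonzero real quadratic `q(z) = q₀z² + 2q₁z + q₂` and a real polynomial
`Π(z) = d₀z⁴ + d₁z³ + d₂z² + d₃z + d₄` of degree at most 4, the ODE
`q²Π'' − 3qq'Π' + 3(q')²Π = 0` holds identically iff `Π = qπ` for some real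
quadratic `π` orthogonal to `q`. -/
theorem ambitoric_symmetric_ODE
    (q0 q1 q2 : ℝ) (hq : ¬(q0 = 0 ∧ q1 = 0 ∧ q2 = 0))
    (d0 d1 d2 d3 d4 : ℝ) :
    (∀ z : ℝ,
      (q0 * z ^ 2 + 2 * q1 * z + q2) ^ 2 * (12 * d0 * z ^ 2 + 6 * d1 * z + 2 * d2)
        - 3 * (q0 * z ^ 2 + 2 * q1 * z + q2) * (2 * q0 * z + 2 * q1) *
            (4 * d0 * z ^ 3 + 3 * d1 * z ^ 2 + 2 * d2 * z + d3)
        + 3 * (2 * q0 * z + 2 * q1) ^ 2 *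
            (d0 * z ^ 4 + d1 * z ^ 3 + d2 * z ^ 2 + d3 * z + d4) = 0)
    ↔ ∃ π0 π1 π2 : ℝ, 2 * π1 * q1 - (π2 * q0 + π0 * q2) = 0 ∧
        ∀ z : ℝ, d0 * z ^ 4 + d1 * z ^ 3 + d2 * z ^ 2 + d3 * z + d4
          = (q0 * z ^ 2 + 2 * q1 * z + q2) * (π0 * z ^ 2 + 2 * π1 * z + π2) := by
  constructor
  · intro h
    have A0 := h 0
    have A1 := h 1
    have A2 := h (-1)
    have A3 := h 2
    have A4 := h (-2)
    -- coefficient equations of the (degree ≤ 4) polynomial identity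
    have e0 : 2*q2^2*d2 - 6*q1*q2*d3 + 12*q1^2*d4 = 0 := by linear_combination A0
    have e1 : 6*q2^2*d1 - 4*q1*q2*d2 - 6*q0*q2*d3 + 24*q0*q1*d4 = 0 := by
      linear_combination (2/3)*A1 - (2/3)*A2 - (1/12)*A3 + (1/12)*A4
    have e2 : 12*q2^2*d0 + 6*q1*q2*d1 - 4*q1^2*d2 - 8*q0*q2*d2 + 6*q0*q1*d3 + 12*q0^2*d4 = 0 := by
      linear_combination (2/3)*A1 + (2/3)*A2 - (1/24)*A3 - (1/24)*A4 - (5/4)*A0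
    have e3 : 24*q1*q2*d0 - 6*q0*q2*d1 - 4*q0*q1*d2 + 6*q0^2*d3 = 0 := by
      linear_combination (-1/6)*A1 + (1/6)*A2 + (1/12)*A3 - (1/12)*A4
    have e4 : 12*q1^2*d0 - 6*q0*q1*d1 + 2*q0^2*d2 = 0 := by
      linear_combination (-1/6)*A1 - (1/6)*A2 + (1/24)*A3 + (1/24)*A4 + (1/4)*A0
    by_cases hq0 : q0 = 0
    · by_cases hq1 : q1 = 0
      · -- q constant, q2 ≠ 0
        have hq2 : q2 ≠ 0 := by
          intro hq2; exact hq ⟨hq0, hq1, hq2⟩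
        subst hq0; subst hq1
        have key : ∀ x : ℝ, 2*q2^2*x = 0 → x = 0 := by
          intro x hx
          rcases mul_eq_zero.1 hx with h' | h'
          · exact absurd h' (by positivity)
          · exact h'
        have hd2 : d2 = 0 := key d2 (by linear_combination e0)
        have hd1 : d1 = 0 := key d1 (by linear_combination (1/3)*e1)
        have hd0 : d0 = 0 := key d0 (by linear_combination (1/6)*e2)
        refine ⟨0, d3/(2*q2), d4/q2, by ring, fun z => ?_⟩
        rw [hd0, hd1, hd2]
        field_simp
        ring
      · -- q0 = 0, q1 ≠ 0
        subst hq0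
        refine ⟨d1/(2*q1), (2*q1*d2 - q2*d1)/(8*q1^2),
          (4*q1^2*d3 - 2*q1*q2*d2 + q2^2*d1)/(8*q1^3), ?_, fun z => ?_⟩
        · field_simp
          linear_combination (-2*q1)*e2 + q2*e3
        · field_simp
          linear_combination (4*q1/3)*z^4*e4 + (4*q1/3)*e0 - (q2/3)*e1
    · -- q0 ≠ 0
      refine ⟨d0/q0, (q0*d1 - 2*q1*d0)/(2*q0^2),
        (q0^2*d2 - 2*q0*q1*d1 + (4*q1^2 - q0*q2)*d0)/q0^3, ?_, fun z => ?_⟩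
      · field_simp
        linear_combination (-1/2)*e4
      · field_simp
        linear_combination (q0/12)*e2 + (q0/6*z - q1/12)*e3 +
          (-(2*q1/3)*z - q2/6)*e4
  · rintro ⟨π0, π1, π2, horth, hP⟩ z
    have B0 := hP 0
    have B1 := hP 1
    have B2 := hP (-1)
    have B3 := hP 2
    have B4 := hP (-2)
    have p0 : d0 = q0*π0 := by
      linear_combination (-1/6)*B1 - (1/6)*B2 + (1/24)*B3 + (1/24)*B4 + (1/4)*B0
    have p1 : d1 = 2*q1*π0 + 2*q0*π1 := by
      linear_combination (-1/6)*B1 + (1/6)*B2 + (1/12)*B3 - (1/12)*B4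
    have p2 : d2 = q2*π0 + 4*q1*π1 + q0*π2 := by
      linear_combination (2/3)*B1 + (2/3)*B2 - (1/24)*B3 - (1/24)*B4 - (5/4)*B0
    have p3 : d3 = 2*q1*π2 + 2*q2*π1 := by
      linear_combination (2/3)*B1 - (2/3)*B2 - (1/12)*B3 + (1/12)*B4
    have p4 : d4 = q2*π2 := by linear_combination B0
    linear_combination
      (12*q2^2*z^2 + 24*q1*q2*z^3 + 12*q1^2*z^4 + 24*q0*q2*z^4 - 24*q0*q2*z^4)*p0 +
      (6*q2^2*z + 6*q1*q2*z^2 - 6*q0*q2*z^3 - 6*q0*q1*z^4)*p1 +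
      (2*q2^2 - 4*q1*q2*z - (4*q1^2 + 8*q0*q2)*z^2 - 4*q0*q1*z^3 + 2*q0^2*z^4)*p2 +
      (-6*q1*q2 - 6*q0*q2*z + 6*q0*q1*z^2 + 6*q0^2*z^3)*p3 +
      (12*q1^2 + 24*q0*q1*z + 12*q0^2*z^2)*p4 -
      2*(q0*z^2 + 2*q1*z + q2)^2*horth
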